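/- Suppose every module in Add(M) (direct summands of direct sums of copies of the S-module M) satisfies Ext¹_S(G, −) = 0 for all Gorenstein projective S-modules G. Then a complex E' of projective S-modules is totally acyclic if and only if e²_λ(E') (applying Y ↦ (0, Y)_0 termwise) is a totally acyclic complex of projective Γ-modules. -/

import Mathlib

open TensorProduct CategoryTheory

universe u
variable (R S M : Type) [CommRing R] [CommRing S]
  [AddCommGroup M] [Module R M] [Module S M] [SMulCommClass R S M]

/-- Modules over the triangular matrix ring Γ = [[R,0],[M,S]]: triples (X,Y,φ). -/
structure TriMod where
  X : Type
  Y : Type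
  [addX : AddCommGroup X]
  [modX : Module R X]
  [addY : AddCommGroup Y]
  [modY : Module S Y]
  phi : (M ⊗[R] X) →ₗ[S] Y

attribute [instance] TriMod.addX TriMod.modX TriMod.addY TriMod.modY

variable {R S M}

lemma lT_aux {X X' : Type} [AddCommGroup X] [Module R X] [AddCommGroup X'] [Module R X']
    (f : X →ₗ[R] X') (s : S) (t : M ⊗[R] X) :
    LinearMap.lTensor M f (s • t) = s • LinearMap.lTensor M f t := by
  induction t using TensorProduct.induction_on with
  | zero => simp
  | tmul m x => simp [TensorProduct.smul_tmul']
  | add a b ha hb => simp only [smul_add, map_add, ha, hb]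

/-- `M ⊗ f` as an `S`-linear map. -/
noncomputable def lT {X X' : Type} [AddCommGroup X] [Module R X] [AddCommGroup X'] [Module R X']
    (f : X →ₗ[R] X') : (M ⊗[R] X) →ₗ[S] (M ⊗[R] X') where
  toFun := LinearMap.lTensor M f
  map_add' := map_add _
  map_smul' s t := lT_aux f s t

@[simp] lemma lT_id {X : Type} [AddCommGroup X] [Module R X] :
    (lT (LinearMap.id : X →ₗ[R] X) : (M ⊗[R] X) →ₗ[S] (M ⊗[R] X)) = LinearMap.id := by
  apply LinearMap.ext; intro t
  simp [lT]

lemma lT_comp {X X' X'' : Type} [AddCommGroup X] [Module R X] [AddCommGroup X'] [Module R X']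
    [AddCommGroup X''] [Module R X''] (f : X →ₗ[R] X') (g : X' →ₗ[R] X'') :
    (lT (g ∘ₗ f) : (M ⊗[R] X) →ₗ[S] _) = (lT g) ∘ₗ (lT f) := by
  apply LinearMap.ext; intro t
  simp [lT, LinearMap.lTensor_comp]

@[simp] lemma lT_zero {X X' : Type} [AddCommGroup X] [Module R X] [AddCommGroup X'] [Module R X'] :
    (lT (0 : X →ₗ[R] X') : (M ⊗[R] X) →ₗ[S] (M ⊗[R] X')) = 0 := by
  apply LinearMap.ext; intro t
  simp [lT]

variable (R S M) in
@[ext] structure TriModHom (A B : TriMod R S M) where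
  f : A.X →ₗ[R] B.X
  g : A.Y →ₗ[S] B.Y
  comm : g ∘ₗ A.phi = B.phi ∘ₗ lT f

instance : Category (TriMod R S M) where
  Hom A B := TriModHom R S M A B
  id A := ⟨LinearMap.id, LinearMap.id, by simp⟩
  comp {A B C} u v := ⟨v.f ∘ₗ u.f, v.g ∘ₗ u.g, by
    rw [LinearMap.comp_assoc, u.comm, ← LinearMap.comp_assoc, v.comm, lT_comp,
      LinearMap.comp_assoc]⟩
  id_comp u := by apply TriModHom.ext <;> simp
  comp_id u := by apply TriModHom.ext <;> simp
  assoc u v w := by apply TriModHom.ext <;> simp [LinearMap.comp_assoc]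

instance instZeroHom (A B : TriMod R S M) : Zero (A ⟶ B) := ⟨⟨0, 0, by simp⟩⟩

@[simp] lemma zero_f (A B : TriMod R S M) : (0 : A ⟶ B).f = 0 := rfl
@[simp] lemma zero_g (A B : TriMod R S M) : (0 : A ⟶ B).g = 0 := rfl
@[simp] lemma comp_f {A B C : TriMod R S M} (u : A ⟶ B) (v : B ⟶ C) :
    (u ≫ v).f = v.f ∘ₗ u.f := rfl
@[simp] lemma comp_g {A B C : TriMod R S M} (u : A ⟶ B) (v : B ⟶ C) :
    (u ≫ v).g = v.g ∘ₗ u.g := rfl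
@[simp] lemma id_f (A : TriMod R S M) : TriModHom.f (𝟙 A) = LinearMap.id := rfl
@[simp] lemma id_g (A : TriMod R S M) : TriModHom.g (𝟙 A) = LinearMap.id := rfl

instance : Limits.HasZeroMorphisms (TriMod R S M) where
  comp_zero u C := by apply TriModHom.ext <;> simp
  zero_comp A {B C} u := by apply TriModHom.ext <;> simp
section Generic
open CategoryTheory Limits
variable {C : Type u} [Category.{v} C] [Limits.HasZeroMorphisms C]

/-- A complex of projectives is totally acyclic if it is acyclic and stays acyclic
under `Hom(-, P)` for every projective `P`. -/
def IsTotallyAcyclic (E : ChainComplex C ℤ) : Prop :=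
  (∀ i, Projective (E.X i)) ∧ (∀ i, E.ExactAt i) ∧
  ∀ (P : C), Projective P → ∀ (i : ℤ) (g : E.X i ⟶ P), E.d (i + 1) i ≫ g = 0 →
    ∃ h : E.X (i - 1) ⟶ P, E.d i (i - 1) ≫ h = g

/-- A complex of injectives is totally acyclic if it is acyclic and stays acyclic
under `Hom(I, -)` for every injective `I`. -/
def IsInjTotallyAcyclic (E : ChainComplex C ℤ) : Prop :=
  (∀ i, Injective (E.X i)) ∧ (∀ i, E.ExactAt i) ∧
  ∀ (I : C), Injective I → ∀ (i : ℤ) (g : I ⟶ E.X i), g ≫ E.d i (i - 1) = 0 →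
    ∃ h : I ⟶ E.X (i + 1), h ≫ E.d (i + 1) i = g

/-- An object is Gorenstein projective if it is a syzygy (a kernel of a differential)
of a totally acyclic complex of projectives. -/
def IsGorensteinProjective (G : C) : Prop :=
  ∃ (E : ChainComplex C ℤ), IsTotallyAcyclic E ∧
    ∃ (ι : G ⟶ E.X 0) (w : ι ≫ E.d 0 (-1) = 0),
      Nonempty (IsLimit (KernelFork.ofι ι w))

/-- An object is Gorenstein injective if it is a cosyzygy (a cokernel of a differential)
of a totally acyclic complex of injectives. -/
def IsGorensteinInjective (G : C) : Prop :=
  ∃ (E : ChainComplex C ℤ), IsInjTotallyAcyclic E ∧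
    ∃ (π : E.X 0 ⟶ G) (w : E.d 1 0 ≫ π = 0),
      Nonempty (IsColimit (CokernelCofork.ofπ π w))

end Generic

/-- `Ext¹_A(P, N) = 0`, phrased as: every extension of `P` by `N` splits. -/
def Ext1Vanishes (A : Type) [Ring A] (P N : Type) [AddCommGroup P] [Module A P]
    [AddCommGroup N] [Module A N] : Prop :=
  ∀ (D : Type) [AddCommGroup D] [Module A D] (i : N →ₗ[A] D) (p : D →ₗ[A] P),
    Function.Injective i → Function.Surjective p → Function.Exact i p →
    ∃ s : P →ₗ[A] D, p ∘ₗ s = LinearMap.id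

/-- A module is Gorenstein projective. -/
def ModGorensteinProjective (A : Type) [Ring A] (N : Type) [AddCommGroup N] [Module A N] :
    Prop := IsGorensteinProjective (ModuleCat.of A N)

/-- A module is Gorenstein injective. -/
def ModGorensteinInjective (A : Type) [Ring A] (N : Type) [AddCommGroup N] [Module A N] :
    Prop := IsGorensteinInjective (ModuleCat.of A N)
section Constructions
open CategoryTheory Limits
variable {R S M : Type} [CommRing R] [CommRing S]
  [AddCommGroup M] [Module R M] [Module S M] [SMulCommClass R S M]

variable (R S M) in
/-- The Γ-module `e¹_λ(X) = (X, M ⊗ X)_1`. -/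
noncomputable def e1obj (X : Type) [AddCommGroup X] [Module R X] : TriMod R S M :=
  ⟨X, M ⊗[R] X, LinearMap.id⟩

variable (R S M) in
/-- The Γ-module `e²_λ(Y) = (0, Y)_0`. -/
noncomputable def e2obj (Y : Type) [AddCommGroup Y] [Module S Y] : TriMod R S M :=
  ⟨PUnit, Y, 0⟩

variable (S M) in
/-- The complex `M ⊗[R] E` of `S`-modules obtained from a complex `E` of `R`-modules. -/
noncomputable def tensorComplex (E : ChainComplex (ModuleCat R) ℤ) :
    ChainComplex (ModuleCat S) ℤ where
  X i := ModuleCat.of S (M ⊗[R] E.X i)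
  d i j := ModuleCat.ofHom (lT (E.d i j).hom)
  shape i j h := by
    have h0 : (E.d i j).hom = 0 := by rw [E.shape i j h]; rfl
    apply ModuleCat.hom_ext
    rw [ModuleCat.hom_ofHom, h0, lT_zero]
    rfl
  d_comp_d' i j k _ _ := by
    have h0 : ((E.d j k).hom ∘ₗ (E.d i j).hom) = 0 := by
      rw [← ModuleCat.hom_comp, E.d_comp_d]; rfl
    apply ModuleCat.hom_ext
    rw [ModuleCat.hom_comp, ModuleCat.hom_ofHom, ModuleCat.hom_ofHom, ← lT_comp, h0, lT_zero]
    rfl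

variable (R S M) in
/-- Condition (1): `M ⊗[R] -` takes acyclic complexes of projective `R`-modules to
acyclic complexes of `S`-modules. -/
def Cond1 : Prop :=
  ∀ (E : ChainComplex (ModuleCat R) ℤ),
    (∀ i, Module.Projective R (E.X i)) → (∀ i, E.ExactAt i) →
    ∀ i, (tensorComplex S M E).ExactAt i

variable (S M) in
/-- `N` lies in `Add(M)`: it is a direct summand of a direct sum of copies of `M`. -/
def MemAdd (N : Type) [AddCommGroup N] [Module S N] : Prop :=
  ∃ (I : Type) (ι : N →ₗ[S] (I →₀ M)) (p : (I →₀ M) →ₗ[S] N), p ∘ₗ ι = LinearMap.id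

variable (R S M) in
/-- Condition (2): `Add(M) ⊆ GProj(S)ᗮ`. -/
def Cond2 : Prop :=
  ∀ (N : Type) [AddCommGroup N] [Module S N], MemAdd S M N →
    ∀ (G : Type) [AddCommGroup G] [Module S G],
      ModGorensteinProjective S G → Ext1Vanishes S G N

end Constructions
section MoreConstructions
open CategoryTheory Limits
variable {R S M : Type} [CommRing R] [CommRing S]
  [AddCommGroup M] [Module R M] [Module S M] [SMulCommClass R S M]

variable (R S M) in
/-- Termwise application of `e¹_λ` to a complex of `R`-modules. -/
noncomputable def e1c (E : ChainComplex (ModuleCat R) ℤ) : ChainComplex (TriMod R S M) ℤ where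
  X i := e1obj R S M (E.X i)
  d i j := ⟨(E.d i j).hom, lT (E.d i j).hom, by
    show lT (E.d i j).hom ∘ₗ LinearMap.id = LinearMap.id ∘ₗ _
    (try simp) <;> rfl⟩
  shape i j h := by
    have h0 : (E.d i j).hom = 0 := by rw [E.shape i j h]; rfl
    apply TriModHom.ext <;> (try simp [h0]) <;> rfl
  d_comp_d' i j k _ _ := by
    have h0 : ((E.d j k).hom ∘ₗ (E.d i j).hom) = 0 := by
      rw [← ModuleCat.hom_comp, E.d_comp_d]; rfl
    apply TriModHom.ext <;> dsimp only [comp_f, comp_g]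
    · exact h0
    · show lT (E.d j k).hom ∘ₗ lT (E.d i j).hom = _
      rw [← lT_comp, h0, lT_zero]; rfl

variable (R S M) in
/-- Termwise application of `e²_λ` to a complex of `S`-modules. -/
noncomputable def e2c (E : ChainComplex (ModuleCat S) ℤ) : ChainComplex (TriMod R S M) ℤ where
  X i := e2obj R S M (E.X i)
  d i j := ⟨0, (E.d i j).hom, by
    show (E.d i j).hom ∘ₗ (0 : (M ⊗[R] PUnit) →ₗ[S] _) = _
    (try simp) <;> rfl⟩
  shape i j h := by
    have h0 : (E.d i j).hom = 0 := by rw [E.shape i j h]; rfl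
    apply TriModHom.ext <;> (try simp [h0]) <;> rfl
  d_comp_d' i j k _ _ := by
    have h0 : ((E.d j k).hom ∘ₗ (E.d i j).hom) = 0 := by
      rw [← ModuleCat.hom_comp, E.d_comp_d]; rfl
    apply TriModHom.ext <;> dsimp only [comp_f, comp_g]
    · simp
    · exact h0

variable (R S M) in
/-- The complex of first components of a complex of Γ-modules. -/
noncomputable def compA (E : ChainComplex (TriMod R S M) ℤ) : ChainComplex (ModuleCat R) ℤ where
  X i := ModuleCat.of R (E.X i).X
  d i j := ModuleCat.ofHom (E.d i j).f
  shape i j h := by rw [E.shape i j h]; rfl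
  d_comp_d' i j k _ _ := by
    have h0 := congrArg TriModHom.f (E.d_comp_d i j k)
    simp only [comp_f, zero_f] at h0
    apply ModuleCat.hom_ext
    exact h0

lemma range_le_comap {A B : TriMod R S M} (u : A ⟶ B) :
    LinearMap.range A.phi ≤ (LinearMap.range B.phi).comap u.g := by
  rintro y ⟨t, rfl⟩
  exact ⟨lT u.f t, (LinearMap.congr_fun u.comm t).symm⟩

variable (R S M) in
/-- The complex `Coker E` of the cokernels of the structure maps of a complex of
Γ-modules. -/
noncomputable def cokerC (E : ChainComplex (TriMod R S M) ℤ) : ChainComplex (ModuleCat S) ℤ where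
  X i := ModuleCat.of S ((E.X i).Y ⧸ LinearMap.range (E.X i).phi)
  d i j := ModuleCat.ofHom (Submodule.mapQ _ _ (E.d i j).g (range_le_comap (E.d i j)))
  shape i j h := by
    apply ModuleCat.hom_ext
    apply LinearMap.ext; intro x
    obtain ⟨y, rfl⟩ := Submodule.Quotient.mk_surjective _ x
    rw [ModuleCat.hom_ofHom]
    rw [Submodule.mapQ_apply, E.shape i j h]
    rfl
  d_comp_d' i j k _ _ := by
    apply ModuleCat.hom_ext
    apply LinearMap.ext; intro x
    obtain ⟨y, rfl⟩ := Submodule.Quotient.mk_surjective _ x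
    have h0 := congrArg TriModHom.g (E.d_comp_d i j k)
    simp only [comp_g, zero_g] at h0
    show Submodule.Quotient.mk ((E.d j k).g ((E.d i j).g y)) = 0
    rw [← LinearMap.comp_apply, h0]
    rfl

end MoreConstructions
section HomModule
open CategoryTheory Limits
variable {R S M : Type} [CommRing R] [CommRing S]
  [AddCommGroup M] [Module R M] [Module S M] [SMulCommClass R S M]

variable (S M) in
/-- Scalar multiplication by `r : R` on `M`, as an `S`-linear map. -/
def rsmulM (r : R) : M →ₗ[S] M where
  toFun m := r • m
  map_add' := smul_add r
  map_smul' s m := (smul_comm r s m)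

/-- The right `R`-module structure on `Hom_S(M, Y)` coming from the `R`-action on `M`. -/
instance homRModule (Y : Type) [AddCommGroup Y] [Module S Y] : Module R (M →ₗ[S] Y) where
  smul r f := f ∘ₗ rsmulM S M r
  one_smul f := by
    apply LinearMap.ext; intro m
    show f ((1 : R) • m) = f m
    rw [one_smul]
  mul_smul r r' f := by
    apply LinearMap.ext; intro m
    show f ((r * r') • m) = f (r' • r • m)
    rw [mul_comm, mul_smul]
  smul_zero r := by apply LinearMap.ext; intro m; rfl
  smul_add r f g := by apply LinearMap.ext; intro m; rfl
  add_smul r r' f := by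
    apply LinearMap.ext; intro m
    show f ((r + r') • m) = f (r • m) + f (r' • m)
    rw [add_smul, map_add]
  zero_smul f := by
    apply LinearMap.ext; intro m
    show f ((0 : R) • m) = 0
    rw [zero_smul, map_zero]

@[simp] lemma homRModule_smul_apply {Y : Type} [AddCommGroup Y] [Module S Y]
    (r : R) (f : M →ₗ[S] Y) (m : M) : (r • f) m = f (r • m) := rfl

/-- Postcomposition `Hom_S(M, g)`, as an `R`-linear map. -/
def hT {Y Y' : Type} [AddCommGroup Y] [Module S Y] [AddCommGroup Y'] [Module S Y']
    (g : Y →ₗ[S] Y') : (M →ₗ[S] Y) →ₗ[R] (M →ₗ[S] Y') where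
  toFun f := g ∘ₗ f
  map_add' f f' := by apply LinearMap.ext; intro m; simp
  map_smul' r f := rfl

@[simp] lemma hT_zero {Y Y' : Type} [AddCommGroup Y] [Module S Y] [AddCommGroup Y']
    [Module S Y'] : hT (R := R) (M := M) (0 : Y →ₗ[S] Y') = 0 := by
  apply LinearMap.ext; intro f; apply LinearMap.ext; intro m; rfl

lemma hT_comp {Y Y' Y'' : Type} [AddCommGroup Y] [Module S Y] [AddCommGroup Y']
    [Module S Y'] [AddCommGroup Y''] [Module S Y''] (g : Y →ₗ[S] Y') (g' : Y' →ₗ[S] Y'') :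
    hT (R := R) (M := M) (g' ∘ₗ g) = (hT g') ∘ₗ (hT g) := by
  apply LinearMap.ext; intro f; apply LinearMap.ext; intro m; rfl

variable (R M) in
/-- The complex `Hom_S(M, E)` of `R`-modules obtained from a complex `E` of `S`-modules. -/
noncomputable def homComplex (E : ChainComplex (ModuleCat S) ℤ) :
    ChainComplex (ModuleCat R) ℤ where
  X i := ModuleCat.of R (M →ₗ[S] E.X i)
  d i j := ModuleCat.ofHom (hT (E.d i j).hom : _ →ₗ[R] _)
  shape i j h := by
    have h0 : (E.d i j).hom = 0 := by rw [E.shape i j h]; rfl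
    apply ModuleCat.hom_ext
    rw [ModuleCat.hom_ofHom, h0, hT_zero]
    rfl
  d_comp_d' i j k _ _ := by
    have h0 : ((E.d j k).hom ∘ₗ (E.d i j).hom) = 0 := by
      rw [← ModuleCat.hom_comp, E.d_comp_d]; rfl
    apply ModuleCat.hom_ext
    show (hT (R := R) (M := M) (E.d j k).hom) ∘ₗ
      (hT (R := R) (M := M) (E.d i j).hom) = 0
    rw [← hT_comp, h0, hT_zero]

variable (R S M) in
/-- Condition (3): `Hom_S(M, -)` takes acyclic complexes of injective `S`-modules to
acyclic complexes of `R`-modules. -/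
def Cond3 : Prop :=
  ∀ (E : ChainComplex (ModuleCat S) ℤ),
    (∀ i, Module.Injective S (E.X i)) → (∀ i, E.ExactAt i) →
    ∀ i, (homComplex R M E).ExactAt i

variable (R S M) in
/-- Condition (4): `Hom_S(M, I) ∈ ᗮGInj(R)` for every injective `S`-module `I`. -/
def Cond4 : Prop :=
  ∀ (I : Type) [AddCommGroup I] [Module S I], Module.Injective S I →
    ∀ (G : Type) [AddCommGroup G] [Module R G],
      ModGorensteinInjective R G → Ext1Vanishes R (M →ₗ[S] I) G

variable (S M) in
/-- The evaluation map `M ⊗_R Hom_S(M, Y) → Y` as an additive map. -/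
noncomputable def evMapAdd (Y : Type) [AddCommGroup Y] [Module S Y] :
    (M ⊗[R] (M →ₗ[S] Y)) →+ Y :=
  TensorProduct.liftAddHom
    (AddMonoidHom.mk' (fun m => AddMonoidHom.mk' (fun f : M →ₗ[S] Y => f m)
      (fun f g => rfl)) (fun m m' => by
        apply AddMonoidHom.ext; intro f; exact f.map_add m m'))
    (fun r m f => by show f (r • m) = (r • f) m; rfl)

lemma evMapAdd_smul {Y : Type} [AddCommGroup Y] [Module S Y] (s : S)
    (t : M ⊗[R] (M →ₗ[S] Y)) : evMapAdd S M Y (s • t) = s • evMapAdd S M Y t := by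
  induction t using TensorProduct.induction_on with
  | zero => simp
  | tmul m f =>
    rw [TensorProduct.smul_tmul']
    show (f : M →ₗ[S] Y) (s • m) = s • f m
    exact f.map_smul s m
  | add a b ha hb => simp only [map_add, smul_add, ha, hb]

variable (S M) in
/-- The evaluation map `M ⊗_R Hom_S(M, Y) → Y`. -/
noncomputable def evMap (Y : Type) [AddCommGroup Y] [Module S Y] :
    (M ⊗[R] (M →ₗ[S] Y)) →ₗ[S] Y where
  toFun := evMapAdd S M Y
  map_add' := map_add _
  map_smul' := evMapAdd_smul

variable (R S M) in
/-- The Γ-module `e²_ρ(Y) = (Hom_S(M,Y), Y)_1`. -/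
noncomputable def e2rhoObj (Y : Type) [AddCommGroup Y] [Module S Y] : TriMod R S M :=
  ⟨M →ₗ[S] Y, Y, evMap S M Y⟩

end HomModule
section Functors
open CategoryTheory Limits
variable (R S M : Type) [CommRing R] [CommRing S]
  [AddCommGroup M] [Module R M] [Module S M] [SMulCommClass R S M]

/-- The evaluation functor `e¹ : Mod Γ → Mod R`, `(X,Y)_φ ↦ X`. -/
noncomputable def ev1 : TriMod R S M ⥤ ModuleCat R where
  obj A := ModuleCat.of R A.X
  map u := ModuleCat.ofHom u.f
  map_id A := rfl
  map_comp u v := rfl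

/-- The functor `e¹_λ : Mod R → Mod Γ`, `X ↦ (X, M ⊗ X)_1`. -/
noncomputable def e1fun : ModuleCat R ⥤ TriMod R S M where
  obj X := e1obj R S M X
  map {X X'} f := ⟨f.hom, lT f.hom, by
    show lT (M := M) (S := S) f.hom ∘ₗ LinearMap.id = LinearMap.id ∘ₗ _
    (try simp) <;> rfl⟩
  map_id X := by
    apply TriModHom.ext
    · rfl
    · exact lT_id
  map_comp {X X' X''} f g := by
    apply TriModHom.ext <;> dsimp only [comp_f, comp_g]
    · rfl
    · show lT (M := M) (S := S) (g.hom ∘ₗ f.hom) = _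
      rw [lT_comp]
      rfl

/-- The evaluation functor `e² : Mod Γ → Mod S`, `(X,Y)_φ ↦ Y`. -/
noncomputable def ev2 : TriMod R S M ⥤ ModuleCat S where
  obj A := ModuleCat.of S A.Y
  map u := ModuleCat.ofHom u.g
  map_id A := rfl
  map_comp u v := rfl

/-- The functor `e²_λ : Mod S → Mod Γ`, `Y ↦ (0, Y)_0`. -/
noncomputable def e2fun : ModuleCat S ⥤ TriMod R S M where
  obj Y := e2obj R S M Y
  map {Y Y'} g := ⟨LinearMap.id, g.hom, by
    show g.hom ∘ₗ (0 : (M ⊗[R] PUnit) →ₗ[S] Y) = _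
    (try simp [e2obj]) <;> rfl⟩
  map_id Y := by apply TriModHom.ext <;> rfl
  map_comp f g := by
    apply TriModHom.ext
    · show LinearMap.id ∘ₗ LinearMap.id = (LinearMap.id : PUnit →ₗ[R] PUnit)
      simp
    · rfl

/-- The functor `e²_ρ : Mod S → Mod Γ`, `Y ↦ (Hom_S(M,Y), Y)_1`. -/
noncomputable def e2rhoFun : ModuleCat S ⥤ TriMod R S M where
  obj Y := e2rhoObj R S M Y
  map {Y Y'} g := ⟨hT g.hom, g.hom, by
    apply LinearMap.ext; intro t
    induction t using TensorProduct.induction_on with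
    | zero => simp
    | tmul m f => rfl
    | add a b ha hb => simp only [map_add, ha, hb]⟩
  map_id Y := by
    apply TriModHom.ext <;> dsimp only [id_f, id_g]
    · apply LinearMap.ext; intro f; apply LinearMap.ext; intro m; rfl
    · rfl
  map_comp f g := by
    apply TriModHom.ext <;> dsimp only [comp_f, comp_g]
    · apply LinearMap.ext; intro u; apply LinearMap.ext; intro m; rfl
    · rfl

end Functors

section Props
open CategoryTheory Limits
variable {R S M : Type} [CommRing R] [CommRing S]
  [AddCommGroup M] [Module R M] [Module S M] [SMulCommClass R S M]

/-- `Ext¹_Γ(P, A) = 0`: every extension `0 → A → D → P → 0` of Γ-modules splits. -/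
def TriExt1Vanishes (P A : TriMod R S M) : Prop :=
  ∀ (D : TriMod R S M) (i : A ⟶ D) (p : D ⟶ P) (w : i ≫ p = 0), Epi p →
    Nonempty (IsLimit (KernelFork.ofι i w)) → ∃ s : P ⟶ D, s ≫ p = 𝟙 P

/-- `A ∈ GProj(Γ)ᗮ`. -/
def TriMemGProjPerp (A : TriMod R S M) : Prop :=
  ∀ G : TriMod R S M, IsGorensteinProjective G → TriExt1Vanishes G A

/-- `A ∈ ᗮGInj(Γ)`. -/
def TriMemPerpGInj (A : TriMod R S M) : Prop :=
  ∀ G : TriMod R S M, IsGorensteinInjective G → TriExt1Vanishes A G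

variable (R S M) in
/-- `Γ` is virtually Gorenstein: `GProj(Γ)ᗮ = ᗮGInj(Γ)`. -/
def TriVirtuallyGorenstein : Prop :=
  ∀ A : TriMod R S M, TriMemGProjPerp A ↔ TriMemPerpGInj A

/-- A ring `A` is virtually Gorenstein: `GProj(A)ᗮ = ᗮGInj(A)`. -/
def RingVirtuallyGorenstein (A : Type) [Ring A] : Prop :=
  ∀ (N : Type) [AddCommGroup N] [Module A N],
    (∀ (G : Type) [AddCommGroup G] [Module A G],
        ModGorensteinProjective A G → Ext1Vanishes A G N) ↔
    (∀ (G : Type) [AddCommGroup G] [Module A G],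
        ModGorensteinInjective A G → Ext1Vanishes A N G)

/-- An object of a category with zero morphisms is indecomposable: it is nonzero and its
only idempotent endomorphisms are `0` and the identity. -/
def Indec {C : Type u} [Category.{v} C] [Limits.HasZeroMorphisms C] (A : C) : Prop :=
  ¬ IsZero A ∧ ∀ e : A ⟶ A, e ≫ e = e → e = 0 ∨ e = 𝟙 A

/-- A Γ-module is finitely generated iff both components are. -/
def TriFG (A : TriMod R S M) : Prop := Module.Finite R A.X ∧ Module.Finite S A.Y

variable (R S M) in
/-- `Γ` is of finite Cohen-Macaulay type. -/
def TriCMFinite : Prop :=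
  ∃ (n : ℕ) (rep : Fin n → TriMod R S M),
    ∀ A : TriMod R S M, TriFG A → Indec A → IsGorensteinProjective A →
      ∃ i : Fin n, Nonempty (A ≅ rep i)

variable (R S M) in
/-- `Γ` is Cohen-Macaulay free. -/
def TriCMFree : Prop :=
  ∀ A : TriMod R S M, TriFG A → IsGorensteinProjective A → Projective A

/-- A ring is of finite Cohen-Macaulay type: up to isomorphism, only finitely many
indecomposable finitely generated Gorenstein projective modules. -/
def RingCMFinite (A : Type) [Ring A] : Prop :=
  ∃ (n : ℕ) (rep : Fin n → ModuleCat.{0} A),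
    ∀ N : ModuleCat.{0} A, Module.Finite A N → Indec N → IsGorensteinProjective N →
      ∃ i : Fin n, Nonempty (N ≅ rep i)

/-- A ring is Cohen-Macaulay free: every finitely generated Gorenstein projective module
is projective. -/
def RingCMFree (A : Type) [Ring A] : Prop :=
  ∀ (N : Type) [AddCommGroup N] [Module A N],
    Module.Finite A N → ModGorensteinProjective A N → Module.Projective A N

end Props



section ProofAux
open CategoryTheory Limits
variable {R S M : Type} [CommRing R] [CommRing S]
  [AddCommGroup M] [Module R M] [Module S M] [SMulCommClass R S M]

lemma punit_dom_eq {P W : Type} [AddCommGroup P] [Module R P] [Subsingleton P]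
    [AddCommGroup W] [Module R W] (f g : P →ₗ[R] W) : f = g := by
  ext x
  rw [Subsingleton.elim x 0, map_zero, map_zero]

lemma punit_cod_eq {P W : Type} [AddCommGroup P] [Module R P] [Subsingleton P]
    [AddCommGroup W] [Module R W] (f g : W →ₗ[R] P) : f = g :=
  LinearMap.ext fun _ => Subsingleton.elim _ _

/-- A morphism `e²(Y) ⟶ e²(Y')` from an `S`-linear map. -/
noncomputable def e2hom {Y Y' : Type} [AddCommGroup Y] [Module S Y] [AddCommGroup Y']
    [Module S Y'] (g : Y →ₗ[S] Y') : e2obj R S M Y ⟶ e2obj R S M Y' :=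
  ⟨0, g, by
    show g ∘ₗ (0 : (M ⊗[R] PUnit) →ₗ[S] Y) = (0 : (M ⊗[R] PUnit) →ₗ[S] Y') ∘ₗ lT 0
    simp⟩

@[simp] lemma e2hom_g {Y Y' : Type} [AddCommGroup Y] [Module S Y] [AddCommGroup Y']
    [Module S Y'] (g : Y →ₗ[S] Y') : (e2hom (R := R) (M := M) g).g = g := rfl

instance e2obj_X_subsingleton {Q : Type} [AddCommGroup Q] [Module S Q] :
    Subsingleton (e2obj R S M Q).X :=
  inferInstanceAs (Subsingleton PUnit)

lemma hom_ext_e2_src {Q : Type} [AddCommGroup Q] [Module S Q] {A : TriMod R S M}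
    {u v : e2obj R S M Q ⟶ A} (h : u.g = v.g) : u = v :=
  TriModHom.ext (punit_dom_eq _ _) h

lemma hom_ext_e2_tgt {Q : Type} [AddCommGroup Q] [Module S Q] {A : TriMod R S M}
    {u v : A ⟶ e2obj R S M Q} (h : u.g = v.g) : u = v :=
  TriModHom.ext (punit_cod_eq _ _) h

lemma g_comp_phi_eq_zero {A : TriMod R S M} {Q : Type} [AddCommGroup Q] [Module S Q]
    (u : A ⟶ e2obj R S M Q) : u.g ∘ₗ A.phi = 0 := by
  rw [u.comm]
  exact LinearMap.zero_comp _

/-- A morphism into `e²(Q)`. -/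
noncomputable def homToE2 {A : TriMod R S M} {Q : Type} [AddCommGroup Q] [Module S Q]
    (g : A.Y →ₗ[S] Q) (hg : g ∘ₗ A.phi = 0) : A ⟶ e2obj R S M Q :=
  ⟨0, g, by
    show g ∘ₗ A.phi = (0 : (M ⊗[R] PUnit) →ₗ[S] Q) ∘ₗ lT 0
    rw [LinearMap.zero_comp]
    exact hg⟩

/-- A morphism out of `e²(Q)`. -/
noncomputable def homFromE2 {Q : Type} [AddCommGroup Q] [Module S Q] {A : TriMod R S M}
    (g : Q →ₗ[S] A.Y) : e2obj R S M Q ⟶ A :=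
  ⟨0, g, by
    show g ∘ₗ (0 : (M ⊗[R] PUnit) →ₗ[S] Q) = A.phi ∘ₗ lT 0
    rw [lT_zero, LinearMap.comp_zero, LinearMap.comp_zero]⟩

@[simp] lemma homFromE2_g {Q : Type} [AddCommGroup Q] [Module S Q] {A : TriMod R S M}
    (g : Q →ₗ[S] A.Y) : (homFromE2 (R := R) (M := M) g).g = g := rfl

lemma isZero_e2obj {Z : Type} [AddCommGroup Z] [Module S Z] (hZ : ∀ z : Z, z = 0) :
    IsZero (e2obj R S M Z) := by
  rw [IsZero.iff_id_eq_zero]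
  exact TriModHom.ext (punit_dom_eq _ _) (LinearMap.ext fun z => hZ z)

end ProofAux


section E2Homology
open CategoryTheory Limits
variable {R S M : Type} [CommRing R] [CommRing S]
  [AddCommGroup M] [Module R M] [Module S M] [SMulCommClass R S M]

variable (R M) in
/-- The `e²` of a short complex of `S`-modules. -/
noncomputable def e2sc (T : ShortComplex (ModuleCat S)) : ShortComplex (TriMod R S M) :=
  ShortComplex.mk (e2hom T.f.hom) (e2hom T.g.hom)
    (hom_ext_e2_src (by
      show T.g.hom ∘ₗ T.f.hom = 0
      ext x
      exact T.moduleCat_zero_apply x))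

namespace E2HD

variable (T : ShortComplex (ModuleCat S))

/-- `f` as a linear map. -/
noncomputable abbrev f₀ : T.X₁ →ₗ[S] T.X₂ := T.f.hom
/-- `g` as a linear map. -/
noncomputable abbrev g₀ : T.X₂ →ₗ[S] T.X₃ := T.g.hom

lemma zero₀ : g₀ T ∘ₗ f₀ T = 0 :=
  LinearMap.ext fun x => T.moduleCat_zero_apply x

/-- `f` corestricted to the kernel of `g`. -/
noncomputable def fc : T.X₁ →ₗ[S] LinearMap.ker (g₀ T) :=
  LinearMap.codRestrict _ (f₀ T) fun x => by
    simpa only [LinearMap.mem_ker, LinearMap.comp_apply, LinearMap.zero_apply] using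
      LinearMap.congr_fun (zero₀ T) x

/-- The image of `fc`. -/
noncomputable abbrev Wsub : Submodule S (LinearMap.ker (g₀ T)) := LinearMap.range (fc T)

/-- The inclusion map of the kernel. -/
noncomputable def iK : e2obj R S M ↥(LinearMap.ker (g₀ T)) ⟶ (e2sc R M T).X₂ :=
  e2hom (LinearMap.ker (g₀ T)).subtype

lemma wi : iK (R := R) (M := M) T ≫ (e2sc R M T).g = 0 :=
  hom_ext_e2_src (by
    show (g₀ T) ∘ₗ (LinearMap.ker (g₀ T)).subtype = 0
    ext x
    simpa using x.2)

/-- The kernel property. -/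
noncomputable def hiDef : IsLimit (KernelFork.ofι (iK (R := R) (M := M) T) (wi T)) :=
  KernelFork.IsLimit.ofι _ _
    (fun {A} t ht => homToE2
      (LinearMap.codRestrict _ t.g fun a => by
        have h := congrArg TriModHom.g ht
        simp only [comp_g, zero_g] at h
        exact LinearMap.congr_fun h a)
      (by
        ext b
        exact LinearMap.congr_fun (g_comp_phi_eq_zero t) b))
    (fun {A} t ht => hom_ext_e2_tgt (by
      show (LinearMap.ker (g₀ T)).subtype ∘ₗ _ = t.g
      exact LinearMap.subtype_comp_codRestrict _ _ _))
    (fun {A} t ht m hm => hom_ext_e2_tgt (by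
      have h2 : (LinearMap.ker (g₀ T)).subtype ∘ₗ m.g = t.g := congrArg TriModHom.g hm
      ext a
      exact Subtype.ext (LinearMap.congr_fun h2 a)))

lemma F'g : ((hiDef (R := R) (M := M) T).lift
    (KernelFork.ofι (e2sc R M T).f (e2sc R M T).zero)).g = fc T := by
  have hF := (hiDef (R := R) (M := M) T).fac
    (KernelFork.ofι (e2sc R M T).f (e2sc R M T).zero) WalkingParallelPair.zero
  have hFg := congrArg TriModHom.g hF
  ext x
  exact Subtype.ext (LinearMap.congr_fun hFg x)

/-- The projection to the left homology. -/
noncomputable def piH : e2obj R S M ↥(LinearMap.ker (g₀ T)) ⟶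
    e2obj R S M (↥(LinearMap.ker (g₀ T)) ⧸ Wsub T) :=
  e2hom (Wsub T).mkQ

lemma wpi : (hiDef (R := R) (M := M) T).lift
    (KernelFork.ofι (e2sc R M T).f (e2sc R M T).zero) ≫ piH T = 0 :=
  hom_ext_e2_src (by
    show (Wsub T).mkQ ∘ₗ ((hiDef (R := R) (M := M) T).lift
      (KernelFork.ofι (e2sc R M T).f (e2sc R M T).zero)).g = 0
    rw [F'g]
    ext x
    exact (Submodule.Quotient.mk_eq_zero (Wsub T)).2 ⟨x, rfl⟩)

/-- The cokernel property of the left homology. -/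
noncomputable def hpiDef : IsColimit (CokernelCofork.ofπ (piH (R := R) (M := M) T) (wpi T)) :=
  CokernelCofork.IsColimit.ofπ _ _
    (fun {A} t ht => homFromE2 ((Wsub T).liftQ t.g (by
      rintro _ ⟨y, rfl⟩
      have h2 := congrArg TriModHom.g ht
      simp only [comp_g, zero_g, F'g] at h2
      exact LinearMap.congr_fun h2 y)))
    (fun {A} t ht => hom_ext_e2_src (by
      show (Wsub T).liftQ t.g _ ∘ₗ (Wsub T).mkQ = t.g
      exact Submodule.liftQ_mkQ _ _ _))
    (fun {A} t ht m hm => hom_ext_e2_src (by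
      have h2 : m.g ∘ₗ (Wsub T).mkQ = t.g := congrArg TriModHom.g hm
      apply Submodule.linearMap_qext
      exact h2.trans (Submodule.liftQ_mkQ _ _ _).symm))

/-- The left homology data of `e2sc T`. -/
noncomputable def leftHD : (e2sc R M T).LeftHomologyData where
  K := e2obj R S M ↥(LinearMap.ker (g₀ T))
  H := e2obj R S M (↥(LinearMap.ker (g₀ T)) ⧸ Wsub T)
  i := iK T
  π := piH T
  wi := wi T
  hi := hiDef T
  wπ := wpi T
  hπ := hpiDef T

/-- `g` descended to the cokernel of `f`. -/
noncomputable def gq : (↥T.X₂ ⧸ LinearMap.range (f₀ T)) →ₗ[S] T.X₃ :=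
  Submodule.liftQ _ (g₀ T) (by
    rintro _ ⟨y, rfl⟩
    simpa only [LinearMap.mem_ker, LinearMap.comp_apply, LinearMap.zero_apply] using
      LinearMap.congr_fun (zero₀ T) y)

/-- The projection onto the cokernel of `f`. -/
noncomputable def pQ : (e2sc R M T).X₂ ⟶ e2obj R S M (↥T.X₂ ⧸ LinearMap.range (f₀ T)) :=
  e2hom (LinearMap.range (f₀ T)).mkQ

lemma wp : (e2sc R M T).f ≫ pQ (R := R) (M := M) T = 0 :=
  hom_ext_e2_src (by
    show (LinearMap.range (f₀ T)).mkQ ∘ₗ f₀ T = 0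
    ext x
    exact (Submodule.Quotient.mk_eq_zero (LinearMap.range (f₀ T))).2 ⟨x, rfl⟩)

/-- The cokernel property. -/
noncomputable def hpDef : IsColimit (CokernelCofork.ofπ (pQ (R := R) (M := M) T) (wp T)) :=
  CokernelCofork.IsColimit.ofπ _ _
    (fun {A} t ht => homFromE2 ((LinearMap.range (f₀ T)).liftQ t.g (by
      rintro _ ⟨y, rfl⟩
      have h2 := congrArg TriModHom.g ht
      simp only [comp_g, zero_g] at h2
      exact LinearMap.congr_fun h2 y)))
    (fun {A} t ht => hom_ext_e2_src (by
      show (LinearMap.range (f₀ T)).liftQ t.g _ ∘ₗ (LinearMap.range (f₀ T)).mkQ = t.g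
      exact Submodule.liftQ_mkQ _ _ _))
    (fun {A} t ht m hm => hom_ext_e2_src (by
      have h2 : m.g ∘ₗ (LinearMap.range (f₀ T)).mkQ = t.g := congrArg TriModHom.g hm
      apply Submodule.linearMap_qext
      exact h2.trans (Submodule.liftQ_mkQ _ _ _).symm))

lemma G'g : ((hpDef (R := R) (M := M) T).desc
    (CokernelCofork.ofπ (e2sc R M T).g (e2sc R M T).zero)).g = gq T := by
  have hG := (hpDef (R := R) (M := M) T).fac
    (CokernelCofork.ofπ (e2sc R M T).g (e2sc R M T).zero) WalkingParallelPair.one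
  have hGg : ((hpDef (R := R) (M := M) T).desc
      (CokernelCofork.ofπ (e2sc R M T).g (e2sc R M T).zero)).g ∘ₗ
      (LinearMap.range (f₀ T)).mkQ = g₀ T := congrArg TriModHom.g hG
  apply Submodule.linearMap_qext
  exact hGg.trans (Submodule.liftQ_mkQ _ _ _).symm

/-- The inclusion of the right homology. -/
noncomputable def iotaH : e2obj R S M ↥(LinearMap.ker (gq T)) ⟶
    e2obj R S M (↥T.X₂ ⧸ LinearMap.range (f₀ T)) :=
  e2hom (LinearMap.ker (gq T)).subtype

lemma wiota : iotaH (R := R) (M := M) T ≫ (hpDef (R := R) (M := M) T).desc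
    (CokernelCofork.ofπ (e2sc R M T).g (e2sc R M T).zero) = 0 :=
  hom_ext_e2_src (by
    show ((hpDef (R := R) (M := M) T).desc
      (CokernelCofork.ofπ (e2sc R M T).g (e2sc R M T).zero)).g ∘ₗ
      (LinearMap.ker (gq T)).subtype = 0
    rw [G'g]
    ext x
    exact x.2)

/-- The kernel property of the right homology. -/
noncomputable def hiotaDef : IsLimit (KernelFork.ofι (iotaH (R := R) (M := M) T) (wiota T)) :=
  KernelFork.IsLimit.ofι _ _
    (fun {A} t ht => homToE2
      (LinearMap.codRestrict _ t.g fun a => by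
        have h := congrArg TriModHom.g ht
        simp only [comp_g, zero_g, G'g] at h
        exact LinearMap.congr_fun h a)
      (by
        ext b
        exact LinearMap.congr_fun (g_comp_phi_eq_zero t) b))
    (fun {A} t ht => hom_ext_e2_tgt (by
      show (LinearMap.ker (gq T)).subtype ∘ₗ _ = t.g
      exact LinearMap.subtype_comp_codRestrict _ _ _))
    (fun {A} t ht m hm => hom_ext_e2_tgt (by
      have h2 : (LinearMap.ker (gq T)).subtype ∘ₗ m.g = t.g := congrArg TriModHom.g hm
      ext a
      exact Subtype.ext (LinearMap.congr_fun h2 a)))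

/-- The right homology data of `e2sc T`. -/
noncomputable def rightHD : (e2sc R M T).RightHomologyData where
  Q := e2obj R S M (↥T.X₂ ⧸ LinearMap.range (f₀ T))
  H := e2obj R S M ↥(LinearMap.ker (gq T))
  p := pQ T
  ι := iotaH T
  wp := wp T
  hp := hpDef T
  wι := wiota T
  hι := hiotaDef T

/-- The underlying map of the comparison between left and right homology. -/
noncomputable def theta0 : (↥(LinearMap.ker (g₀ T)) ⧸ Wsub T) →ₗ[S] ↥(LinearMap.ker (gq T)) :=
  Submodule.liftQ _
    (LinearMap.codRestrict _
      ((LinearMap.range (f₀ T)).mkQ ∘ₗ (LinearMap.ker (g₀ T)).subtype) fun x => x.2)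
    (by
      rintro _ ⟨y, rfl⟩
      apply Subtype.ext
      exact (Submodule.Quotient.mk_eq_zero (LinearMap.range (f₀ T))).2 ⟨y, rfl⟩)

lemma theta0_bij : Function.Bijective (theta0 T) := by
  constructor
  · rw [← LinearMap.ker_eq_bot]
    apply Submodule.ker_liftQ_eq_bot
    intro x hx
    have hx2 : ((LinearMap.range (f₀ T)).mkQ x.val = 0) := congrArg Subtype.val hx
    obtain ⟨y, hy⟩ := (Submodule.Quotient.mk_eq_zero _).1 hx2
    exact ⟨y, Subtype.ext hy⟩
  · intro z
    obtain ⟨y, hy⟩ := Submodule.Quotient.mk_surjective _ z.val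
    have hyk : y ∈ LinearMap.ker (g₀ T) := by
      show gq T (Submodule.Quotient.mk y) = 0
      rw [hy]
      exact z.2
    exact ⟨Submodule.Quotient.mk ⟨y, hyk⟩, Subtype.ext hy⟩

/-- The homology data of `e2sc T`. -/
noncomputable def hd : (e2sc R M T).HomologyData where
  left := leftHD T
  right := rightHD T
  iso := {
    hom := e2hom (theta0 T)
    inv := e2hom ((LinearEquiv.ofBijective (theta0 T) (theta0_bij T)).symm :
      ↥(LinearMap.ker (gq T)) →ₗ[S] _)
    hom_inv_id := hom_ext_e2_src (by
      ext x
      exact (LinearEquiv.ofBijective (theta0 T) (theta0_bij T)).symm_apply_apply x)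
    inv_hom_id := hom_ext_e2_src (by
      ext x
      exact (LinearEquiv.ofBijective (theta0 T) (theta0_bij T)).apply_symm_apply x) }
  comm := hom_ext_e2_src (by ext x; rfl)

end E2HD

variable (R M) in
lemma e2sc_exact_iff (T : ShortComplex (ModuleCat S)) :
    (e2sc R M T).Exact ↔ T.Exact := by
  rw [(E2HD.hd (R := R) (M := M) T).exact_iff, T.moduleCat_exact_iff]
  constructor
  · intro hz x hx
    have h0 : (𝟙 (e2obj R S M (↥(LinearMap.ker (E2HD.g₀ T)) ⧸ E2HD.Wsub T))) = 0 :=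
      hz.eq_of_src _ _
    have h1 := congrArg TriModHom.g h0
    simp only [id_g, zero_g] at h1
    have h2 := LinearMap.congr_fun h1
      (Submodule.Quotient.mk (⟨x, hx⟩ : LinearMap.ker (E2HD.g₀ T)))
    obtain ⟨y, hy⟩ := (Submodule.Quotient.mk_eq_zero (E2HD.Wsub T)).1 h2
    exact ⟨y, congrArg Subtype.val hy⟩
  · intro hex
    apply isZero_e2obj
    intro z
    obtain ⟨⟨x, hx⟩, rfl⟩ := Submodule.Quotient.mk_surjective _ z
    rw [Submodule.Quotient.mk_eq_zero]
    obtain ⟨y, hy⟩ := hex x hx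
    exact ⟨y, Subtype.ext hy⟩

variable (R M) in
lemma e2c_exactAt_iff (E : ChainComplex (ModuleCat S) ℤ) (i : ℤ) :
    (e2c R S M E).ExactAt i ↔ E.ExactAt i := by
  rw [HomologicalComplex.exactAt_iff' (e2c R S M E) (i+1) i (i-1)
      (by rw [ChainComplex.prev]) (by rw [ChainComplex.next]),
    HomologicalComplex.exactAt_iff' E (i+1) i (i-1)
      (by rw [ChainComplex.prev]) (by rw [ChainComplex.next])]
  exact e2sc_exact_iff R M (E.sc' (i+1) i (i-1))

end E2Homology


section EpiProj
open CategoryTheory Limits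
variable {R S M : Type} [CommRing R] [CommRing S]
  [AddCommGroup M] [Module R M] [Module S M] [SMulCommClass R S M]

lemma epi_f_surjective {A B : TriMod R S M} (p : A ⟶ B) [Epi p] :
    Function.Surjective p.f := by
  let C : TriMod R S M := ⟨(B.X ⧸ LinearMap.range p.f), PUnit, 0⟩
  let v : B ⟶ C := ⟨(LinearMap.range p.f).mkQ, 0, punit_cod_eq _ _⟩
  have hv : p ≫ v = p ≫ 0 := by
    rw [comp_zero]
    apply TriModHom.ext
    · show (LinearMap.range p.f).mkQ ∘ₗ p.f = (0 : A ⟶ C).f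
      ext x
      exact (Submodule.Quotient.mk_eq_zero (LinearMap.range p.f)).2 ⟨x, rfl⟩
    · exact punit_cod_eq _ _
  have hv0 : v = 0 := (cancel_epi p).1 hv
  intro x
  have h1 : (LinearMap.range p.f).mkQ x = 0 :=
    LinearMap.congr_fun (congrArg TriModHom.f hv0) x
  exact (Submodule.Quotient.mk_eq_zero (LinearMap.range p.f)).1 h1

lemma epi_g_surjective {A B : TriMod R S M} (p : A ⟶ B) [Epi p] :
    Function.Surjective p.g := by
  set N : Submodule S B.Y := LinearMap.range p.g ⊔ LinearMap.range B.phi with hN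
  let w : B ⟶ e2obj R S M (B.Y ⧸ N) := homToE2 N.mkQ (by
    ext t
    exact (Submodule.Quotient.mk_eq_zero N).2 (Submodule.mem_sup_right ⟨t, rfl⟩))
  have hw : p ≫ w = p ≫ 0 := by
    rw [comp_zero]
    apply hom_ext_e2_tgt
    show N.mkQ ∘ₗ p.g = (0 : A ⟶ e2obj R S M (B.Y ⧸ N)).g
    ext a
    exact (Submodule.Quotient.mk_eq_zero N).2 (Submodule.mem_sup_left ⟨a, rfl⟩)
  have hw0 : w = 0 := (cancel_epi p).1 hw
  have hNtop : ∀ y : B.Y, y ∈ N := by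
    intro y
    have h1 : N.mkQ y = 0 := LinearMap.congr_fun (congrArg TriModHom.g hw0) y
    exact (Submodule.Quotient.mk_eq_zero N).1 h1
  intro y
  obtain ⟨a, ⟨a', rfl⟩, b, ⟨t, rfl⟩, hab⟩ := Submodule.mem_sup.1 (hNtop y)
  obtain ⟨t', ht'⟩ := LinearMap.lTensor_surjective M (epi_f_surjective p) t
  refine ⟨a' + A.phi t', ?_⟩
  rw [map_add]
  have hc : p.g (A.phi t') = B.phi (LinearMap.lTensor M p.f t') :=
    LinearMap.congr_fun p.comm t'
  rw [hc, ht']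
  exact hab

lemma projective_e2obj {P : Type} [AddCommGroup P] [Module S P] (hP : Module.Projective S P) :
    Projective (e2obj R S M P) := by
  constructor
  intro E X f e he
  obtain ⟨h, hh⟩ := Module.projective_lifting_property (h := hP) e.g f.g (epi_g_surjective e)
  exact ⟨homFromE2 h, hom_ext_e2_src (show e.g ∘ₗ h = f.g from hh)⟩

end EpiProj

section ShiftGP
open CategoryTheory Limits
variable {S : Type} [CommRing S]

/-- Shift of a `ℤ`-indexed chain complex. -/
noncomputable def shiftE (E : ChainComplex (ModuleCat.{0} S) ℤ) (c : ℤ) :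
    ChainComplex (ModuleCat.{0} S) ℤ where
  X j := E.X (j + c)
  d a b := E.d (a + c) (b + c)
  shape a b h := E.shape _ _ (by
    simp only [ComplexShape.down_Rel] at h ⊢
    omega)
  d_comp_d' a b c' _ _ := E.d_comp_d _ _ _

lemma cast_comp_d (E : ChainComplex (ModuleCat.{0} S) ℤ) {a a' b : ℤ} (h : a = a') :
    eqToHom (congrArg E.X h) ≫ E.d a' b = E.d a b := by
  subst h; simp

lemma d_comp_cast (E : ChainComplex (ModuleCat.{0} S) ℤ) {a b b' : ℤ} (h : b = b') :
    E.d a b ≫ eqToHom (congrArg E.X h) = E.d a b' := by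
  subst h; simp

lemma shiftE_exactAt (E : ChainComplex (ModuleCat.{0} S) ℤ) (c : ℤ) (i : ℤ)
    (hE : E.ExactAt (i + c)) : (shiftE E c).ExactAt i := by
  rw [HomologicalComplex.exactAt_iff' (shiftE E c) (i+1) i (i-1)
    (by rw [ChainComplex.prev]) (by rw [ChainComplex.next])]
  rw [HomologicalComplex.exactAt_iff' E (i+1+c) (i+c) (i-1+c)
    (by rw [ChainComplex.prev]; ring) (by rw [ChainComplex.next]; ring)] at hE
  exact hE

lemma shiftE_totallyAcyclic {E : ChainComplex (ModuleCat.{0} S) ℤ} (hE : IsTotallyAcyclic E)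
    (c : ℤ) : IsTotallyAcyclic (shiftE E c) := by
  obtain ⟨h1, h2, h3⟩ := hE
  refine ⟨fun i => h1 (i + c), fun i => shiftE_exactAt E c i (h2 (i+c)), ?_⟩
  intro P hP i g hg
  have hg' : E.d (i+c+1) (i+c) ≫ g = 0 := by
    rw [show i+c+1 = i+1+c by ring]
    exact hg
  obtain ⟨h, hh⟩ := h3 P hP (i+c) g hg'
  refine ⟨eqToHom (congrArg E.X (show i-1+c = i+c-1 by ring)) ≫ h, ?_⟩
  show E.d (i+c) (i-1+c) ≫ (eqToHom (congrArg E.X (show i-1+c = i+c-1 by ring)) ≫ h) = g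
  rw [← Category.assoc, d_comp_cast E (show i-1+c = i+c-1 by ring), hh]

lemma GP_of_syzygy (F : ChainComplex (ModuleCat.{0} S) ℤ) (hF : IsTotallyAcyclic F)
    (a b : ℤ) (hab : a = b + 1) (N : Type) [AddCommGroup N] [Module S N]
    (ι : N →ₗ[S] F.X b) (hinj : Function.Injective ι)
    (hr : LinearMap.range ι = LinearMap.range (F.d a b).hom) :
    ModGorensteinProjective S N := by
  have hex := (HomologicalComplex.exactAt_iff' F a b (-1+b)
    (by rw [ChainComplex.prev]; omega) (by rw [ChainComplex.next]; omega)).1 (hF.2.1 b)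
  rw [ShortComplex.moduleCat_exact_iff] at hex
  let κ : F.X b ⟶ F.X (0 + b) := eqToHom (congrArg F.X (zero_add b).symm)
  let κ' : F.X (0 + b) ⟶ F.X b := eqToHom (congrArg F.X (zero_add b))
  have hκ : ∀ x, κ' (κ x) = x := fun x => by
    change (κ ≫ κ') x = x
    rw [show κ ≫ κ' = 𝟙 (F.X b) by simp [κ, κ']]
    rfl
  have hκ' : ∀ x, κ (κ' x) = x := fun x => by
    change (κ' ≫ κ) x = x
    rw [show κ' ≫ κ = 𝟙 (F.X (0 + b)) by simp [κ, κ']]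
    rfl
  have hκd : κ ≫ F.d (0+b) (-1+b) = F.d b (-1+b) := cast_comp_d F (zero_add b).symm
  have hκ'd : κ' ≫ F.d b (-1+b) = F.d (0+b) (-1+b) := cast_comp_d F (zero_add b)
  have hdd : ∀ y : F.X a, (F.d b (-1+b)).hom
      ((F.d a b).hom y) = 0 := by
    intro y
    change (F.d a b ≫ F.d b (-1+b)) y = 0
    rw [F.d_comp_d]
    rfl
  refine ⟨shiftE F b, shiftE_totallyAcyclic hF b,
    (show ModuleCat.of.{0} S N ⟶ F.X b from ModuleCat.ofHom ι) ≫ κ, ?_, ⟨?_⟩⟩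
  · apply ModuleCat.hom_ext
    apply LinearMap.ext
    intro n
    change (F.d (0+b) (-1+b)) (κ (ι n)) = 0
    have e1 : (F.d (0+b) (-1+b)) (κ (ι n)) = (F.d b (-1+b)) (ι n) := by
      change (κ ≫ F.d (0+b) (-1+b)) (ι n) = _
      rw [hκd]
    rw [e1]
    have hn : ι n ∈ LinearMap.range (F.d a b).hom :=
      hr ▸ LinearMap.mem_range_self ι n
    obtain ⟨y, hy⟩ := hn
    rw [← hy]
    exact hdd y
  · have key : ∀ z : LinearMap.range ι, ι ((LinearEquiv.ofInjective ι hinj).symm z) = z.val :=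
      fun z => congrArg Subtype.val ((LinearEquiv.ofInjective ι hinj).apply_symm_apply z)
    have hmem : ∀ {T' : ModuleCat.{0} S} (t : T' ⟶ (shiftE F b).X 0),
        t ≫ (shiftE F b).d 0 (-1) = 0 → ∀ x : T', κ' (t x) ∈ LinearMap.range ι := by
      intro T' t ht x
      rw [hr]
      obtain ⟨y, hy⟩ := hex (κ' (t x)) (by
        change (κ' ≫ F.d b (-1+b)) (t x) = 0
        rw [hκ'd]
        change (t ≫ (shiftE F b).d 0 (-1)) x = 0
        rw [ht]
        rfl)
      exact LinearMap.mem_range.2 ⟨y, hy⟩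
    refine KernelFork.IsLimit.ofι _ _
      (fun {T'} t ht => ModuleCat.ofHom ((LinearEquiv.ofInjective ι hinj).symm.toLinearMap ∘ₗ
        LinearMap.codRestrict _ (κ'.hom ∘ₗ t.hom)
          (hmem t ht)))
      (fun {T'} t ht => ?_) (fun {T'} t ht m hm => ?_)
    · apply ModuleCat.hom_ext
      apply LinearMap.ext
      intro x
      show κ (ι ((LinearEquiv.ofInjective ι hinj).symm
        (⟨κ' (t x), hmem t ht x⟩ : LinearMap.range ι))) = t x
      rw [key]
      exact hκ' (t x)
    · apply ModuleCat.hom_ext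
      apply LinearMap.ext
      intro x
      apply hinj
      have hmx : κ (ι (m x)) = t x := LinearMap.congr_fun (congrArg ModuleCat.Hom.hom hm) x
      show ι (m x) = ι ((LinearEquiv.ofInjective ι hinj).symm
        (⟨κ' (t x), hmem t ht x⟩ : LinearMap.range ι))
      rw [key]
      show ι (m x) = κ' (t x)
      rw [← hmx, hκ]

end ShiftGP

section ExtLifts
open CategoryTheory Limits
variable {R S M : Type} [CommRing R] [CommRing S]
  [AddCommGroup M] [Module R M] [Module S M] [SMulCommClass R S M]

lemma extend_of_ext1 {Z E N : Type} [AddCommGroup Z] [Module S Z] [AddCommGroup E]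
    [Module S E] [AddCommGroup N] [Module S N] (ι : Z →ₗ[S] E)
    (hinj : Function.Injective ι) (W : Submodule S E) (hW : LinearMap.range ι = W)
    (hext : Ext1Vanishes S (E ⧸ W) N) (g : Z →ₗ[S] N) :
    ∃ h : E →ₗ[S] N, h ∘ₗ ι = g := by
  subst hW
  set U : Submodule S (N × E) := LinearMap.range (LinearMap.prod (-g) ι) with hU
  let iD : N →ₗ[S] (N × E) ⧸ U := U.mkQ ∘ₗ LinearMap.inl S N E
  let pD : ((N × E) ⧸ U) →ₗ[S] (E ⧸ LinearMap.range ι) :=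
    U.liftQ ((LinearMap.range ι).mkQ ∘ₗ LinearMap.snd S N E) (by
      rintro _ ⟨z, rfl⟩
      show (LinearMap.range ι).mkQ (ι z) = 0
      exact (Submodule.Quotient.mk_eq_zero _).2 ⟨z, rfl⟩)
  have hiD0 : ∀ n, iD n = 0 → n = 0 := by
    intro n hn
    have hmem : ((n, 0) : N × E) ∈ U := (Submodule.Quotient.mk_eq_zero U).1 hn
    obtain ⟨z, hz⟩ := hmem
    have hz1 : ι z = 0 := congrArg Prod.snd hz
    have hz0 : z = 0 := hinj (by rw [hz1, map_zero])
    have hz2 : -g z = n := congrArg Prod.fst hz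
    rw [hz0] at hz2
    simpa using hz2.symm
  have hiDinj : Function.Injective iD := by
    intro x y hxy
    have := hiD0 (x - y) (by rw [map_sub, hxy, sub_self])
    exact sub_eq_zero.1 this
  have hpsurj : Function.Surjective pD := by
    intro c
    obtain ⟨e, rfl⟩ := Submodule.Quotient.mk_surjective _ c
    exact ⟨U.mkQ (0, e), rfl⟩
  have hexact : Function.Exact iD pD := by
    intro y
    constructor
    · intro hy
      obtain ⟨⟨n, e⟩, rfl⟩ := Submodule.Quotient.mk_surjective U y
      have he : e ∈ LinearMap.range ι := (Submodule.Quotient.mk_eq_zero _).1 hy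
      obtain ⟨z, rfl⟩ := he
      refine ⟨n + g z, ?_⟩
      show U.mkQ (n + g z, 0) = Submodule.Quotient.mk (n, ι z)
      apply (Submodule.Quotient.eq U).2
      refine ⟨-z, ?_⟩
      show ((-g) (-z), ι (-z)) = (n + g z, 0) - (n, ι z)
      simp
    · rintro ⟨n, rfl⟩
      show pD (U.mkQ (n, 0)) = 0
      show (LinearMap.range ι).mkQ 0 = 0
      simp
  obtain ⟨s, hs⟩ := hext _ iD pD hiDinj hpsurj hexact
  let τ : E →ₗ[S] ((N × E) ⧸ U) :=
    U.mkQ ∘ₗ LinearMap.inr S N E - s ∘ₗ (LinearMap.range ι).mkQ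
  have hτ : ∀ e, τ e ∈ LinearMap.range iD := by
    intro e
    have hp0 : pD (τ e) = 0 := by
      show pD (U.mkQ (0, e) - s ((LinearMap.range ι).mkQ e)) = 0
      rw [map_sub]
      have h1 : pD (U.mkQ (0, e)) = (LinearMap.range ι).mkQ e := rfl
      have h2 : pD (s ((LinearMap.range ι).mkQ e)) = (LinearMap.range ι).mkQ e :=
        LinearMap.congr_fun hs _
      rw [h1, h2, sub_self]
    obtain ⟨n, hn⟩ := (hexact (τ e)).1 hp0
    exact ⟨n, hn⟩
  let eD := LinearEquiv.ofInjective iD hiDinj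
  let h : E →ₗ[S] N := eD.symm.toLinearMap ∘ₗ LinearMap.codRestrict _ τ hτ
  have hkey : ∀ e, iD (h e) = τ e := by
    intro e
    show iD (eD.symm ⟨τ e, hτ e⟩) = τ e
    exact congrArg Subtype.val (eD.apply_symm_apply ⟨τ e, hτ e⟩)
  refine ⟨h, ?_⟩
  apply LinearMap.ext
  intro z
  apply hiDinj
  rw [show iD ((h ∘ₗ ι) z) = τ (ι z) from hkey (ι z)]
  have h1 : (LinearMap.range ι).mkQ (ι z) = 0 := (Submodule.Quotient.mk_eq_zero _).2 ⟨z, rfl⟩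
  show U.mkQ (0, ι z) - s ((LinearMap.range ι).mkQ (ι z)) = iD (g z)
  rw [h1, map_zero, sub_zero]
  show (Submodule.Quotient.mk (0, ι z) : (N × E) ⧸ U) = Submodule.Quotient.mk (g z, 0)
  apply (Submodule.Quotient.eq U).2
  refine ⟨z, ?_⟩
  show ((-g) z, ι z) = (0, ι z) - (g z, 0)
  simp

variable (S) in
/-- The lifting property of a complex against a module. -/
def Lifts (E : ChainComplex (ModuleCat.{0} S) ℤ) (N : Type) [AddCommGroup N] [Module S N] : Prop :=
  ∀ (i : ℤ) (g : E.X i →ₗ[S] N), g ∘ₗ (E.d (i+1) i).hom = 0 →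
    ∃ h : E.X (i-1) →ₗ[S] N, h ∘ₗ (E.d i (i-1)).hom = g

lemma lifts_retract {E : ChainComplex (ModuleCat.{0} S) ℤ} {N N' : Type} [AddCommGroup N]
    [Module S N] [AddCommGroup N'] [Module S N'] (ι : N' →ₗ[S] N) (ρ : N →ₗ[S] N')
    (hρι : ρ ∘ₗ ι = LinearMap.id) (hN : Lifts S E N) : Lifts S E N' := by
  intro i g hg
  obtain ⟨h, hh⟩ := hN i (ι ∘ₗ g) (by rw [LinearMap.comp_assoc, hg, LinearMap.comp_zero])
  refine ⟨ρ ∘ₗ h, ?_⟩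
  rw [LinearMap.comp_assoc, hh, ← LinearMap.comp_assoc, hρι, LinearMap.id_comp]

lemma lifts_prod {E : ChainComplex (ModuleCat.{0} S) ℤ} {N₁ N₂ : Type} [AddCommGroup N₁]
    [Module S N₁] [AddCommGroup N₂] [Module S N₂] (h1 : Lifts S E N₁) (h2 : Lifts S E N₂) :
    Lifts S E (N₁ × N₂) := by
  intro i g hg
  obtain ⟨u, hu⟩ := h1 i (LinearMap.fst S N₁ N₂ ∘ₗ g)
    (by rw [LinearMap.comp_assoc, hg, LinearMap.comp_zero])
  obtain ⟨v, hv⟩ := h2 i (LinearMap.snd S N₁ N₂ ∘ₗ g)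
    (by rw [LinearMap.comp_assoc, hg, LinearMap.comp_zero])
  refine ⟨LinearMap.prod u v, ?_⟩
  apply LinearMap.ext
  intro x
  exact Prod.ext (LinearMap.congr_fun hu x) (LinearMap.congr_fun hv x)

lemma lifts_of_projective {E : ChainComplex (ModuleCat.{0} S) ℤ} (hE : IsTotallyAcyclic E)
    (N : Type) [AddCommGroup N] [Module S N] (hN : Module.Projective S N) :
    Lifts S E N := by
  intro i g hg
  have hP : Projective (ModuleCat.of.{0} S N) := (IsProjective.iff_projective _).1 hN
  obtain ⟨h, hh⟩ := hE.2.2 (ModuleCat.of.{0} S N) hP i (ModuleCat.ofHom g)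
    (ModuleCat.hom_ext hg)
  exact ⟨h.hom, congrArg ModuleCat.Hom.hom hh⟩

lemma lifts_finsuppM {E : ChainComplex (ModuleCat.{0} S) ℤ} (hE : IsTotallyAcyclic E)
    (h2 : Cond2 S M) (I : Type) : Lifts S E (I →₀ M) := by
  intro i g hg
  have hexi := (HomologicalComplex.exactAt_iff' E (i+1) i (i-1)
    (by rw [ChainComplex.prev]) (by rw [ChainComplex.next])).1 (hE.2.1 i)
  rw [ShortComplex.moduleCat_exact_iff] at hexi
  have hexi1 := (HomologicalComplex.exactAt_iff' E i (i-1) (i-2)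
    (by rw [ChainComplex.prev]; omega) (by rw [ChainComplex.next]; omega)).1 (hE.2.1 (i-1))
  rw [ShortComplex.moduleCat_exact_iff] at hexi1
  have hgK : LinearMap.ker (E.d i (i-1)).hom ≤ LinearMap.ker g := by
    intro x hx
    obtain ⟨y, hy⟩ := hexi x hx
    rw [LinearMap.mem_ker, ← hy]
    exact LinearMap.congr_fun hg y
  set K := LinearMap.ker (E.d i (i-1)).hom with hK
  let gbar : (↥(E.X i) ⧸ K) →ₗ[S] (I →₀ M) := K.liftQ g hgK
  let ι : (↥(E.X i) ⧸ K) →ₗ[S] E.X (i-1) :=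
    K.liftQ (E.d i (i-1)).hom (le_refl _)
  have hιinj : Function.Injective ι := by
    rw [← LinearMap.ker_eq_bot]
    exact Submodule.ker_liftQ_eq_bot _ _ _ (le_refl _)
  have hιrange : LinearMap.range ι =
      LinearMap.range (E.d i (i-1)).hom :=
    Submodule.range_liftQ _ _ _
  have hdd : LinearMap.range (E.d i (i-1)).hom ≤
      LinearMap.ker (E.d (i-1) (i-2)).hom := by
    rintro _ ⟨y, rfl⟩
    show (E.d (i-1) (i-2)) ((E.d i (i-1)) y) = 0
    change (E.d i (i-1) ≫ E.d (i-1) (i-2)) y = 0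
    rw [E.d_comp_d]
    rfl
  have hGP : ModGorensteinProjective S
      (↥(E.X (i-1)) ⧸ LinearMap.range (E.d i (i-1)).hom) := by
    apply GP_of_syzygy E hE (i-1) (i-2) (by ring) _
      ((LinearMap.range (E.d i (i-1)).hom).liftQ
        (E.d (i-1) (i-2)).hom hdd) ?_ ?_
    · rw [← LinearMap.ker_eq_bot]
      apply Submodule.ker_liftQ_eq_bot
      intro x hx
      obtain ⟨y, hy⟩ := hexi1 x hx
      exact ⟨y, hy⟩
    · exact Submodule.range_liftQ _ _ _
  have hmem : MemAdd S M (I →₀ M) := ⟨I, LinearMap.id, LinearMap.id, rfl⟩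
  have hext : Ext1Vanishes S
      (↥(E.X (i-1)) ⧸ LinearMap.range (E.d i (i-1)).hom)
      (I →₀ M) := h2 (I →₀ M) hmem _ hGP
  obtain ⟨h, hh⟩ := extend_of_ext1 ι hιinj _ hιrange hext gbar
  refine ⟨h, ?_⟩
  have hfact : (E.d i (i-1)).hom = ι ∘ₗ K.mkQ :=
    (K.liftQ_mkQ _ _).symm
  rw [hfact, ← LinearMap.comp_assoc, hh]
  exact K.liftQ_mkQ g hgK

end ExtLifts


section Retracts
open CategoryTheory Limits
variable {R S M : Type} [CommRing R] [CommRing S]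
  [AddCommGroup M] [Module R M] [Module S M] [SMulCommClass R S M]

/-- `finsuppScalarRight` as an `S`-linear map. -/
noncomputable def t2fAux (I : Type) [DecidableEq I] : (M ⊗[R] (I →₀ R)) →ₗ[S] (I →₀ M) where
  toFun := TensorProduct.finsuppScalarRight R R M I
  map_add' := map_add _
  map_smul' s t := by
    simp only [RingHom.id_apply]
    induction t using TensorProduct.induction_on with
    | zero => simp
    | tmul m f =>
      rw [TensorProduct.smul_tmul', TensorProduct.finsuppScalarRight_apply_tmul,
        TensorProduct.finsuppScalarRight_apply_tmul, Finsupp.smul_sum]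
      apply Finsupp.sum_congr
      intro i _
      rw [Finsupp.smul_single]
      congr 1
      exact smul_comm (f i) s m
    | add a b ha hb => simp only [smul_add, map_add, ha, hb]

/-- The inverse of `finsuppScalarRight` as an `S`-linear map. -/
noncomputable def f2tAux (I : Type) [DecidableEq I] : (I →₀ M) →ₗ[S] (M ⊗[R] (I →₀ R)) where
  toFun := (TensorProduct.finsuppScalarRight R R M I).symm
  map_add' := map_add _
  map_smul' s y := by
    simp only [RingHom.id_apply]
    apply (TensorProduct.finsuppScalarRight R R M I).injective
    rw [LinearEquiv.apply_symm_apply]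
    have h := (t2fAux (R := R) (S := S) (M := M) I).map_smul s
      ((TensorProduct.finsuppScalarRight R R M I).symm y)
    rw [show (TensorProduct.finsuppScalarRight R R M I)
        (s • (TensorProduct.finsuppScalarRight R R M I).symm y) =
        s • (TensorProduct.finsuppScalarRight R R M I)
        ((TensorProduct.finsuppScalarRight R R M I).symm y) from h,
      LinearEquiv.apply_symm_apply]

/-- `finsuppScalarRight` as an `S`-linear map. -/
noncomputable def t2f (I : Type) : (M ⊗[R] (I →₀ R)) →ₗ[S] (I →₀ M) :=
  letI := Classical.decEq I
  t2fAux I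

/-- The inverse of `finsuppScalarRight` as an `S`-linear map. -/
noncomputable def f2t (I : Type) : (I →₀ M) →ₗ[S] (M ⊗[R] (I →₀ R)) :=
  letI := Classical.decEq I
  f2tAux I

lemma f2t_comp_t2f (I : Type) :
    (f2t (R := R) (S := S) (M := M) I) ∘ₗ (t2f (R := R) (S := S) (M := M) I) =
      LinearMap.id := by
  letI := Classical.decEq I
  apply LinearMap.ext
  intro x
  show (TensorProduct.finsuppScalarRight R R M I).symm
    ((TensorProduct.finsuppScalarRight R R M I) x) = x
  exact (TensorProduct.finsuppScalarRight R R M I).symm_apply_apply x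

lemma proj_Y_retract (P : TriMod R S M) (hP : Projective P) :
    ∃ (ι : P.Y →ₗ[S] (M ⊗[R] (P.X →₀ R)) × (P.Y →₀ S))
      (ρ : ((M ⊗[R] (P.X →₀ R)) × (P.Y →₀ S)) →ₗ[S] P.Y), ρ ∘ₗ ι = LinearMap.id := by
  classical
  set α : (P.X →₀ R) →ₗ[R] P.X := Finsupp.linearCombination R id with hα0
  set β : (P.Y →₀ S) →ₗ[S] P.Y := Finsupp.linearCombination S id with hβ0
  have hα : Function.Surjective α := fun x => ⟨Finsupp.single x 1, by
    rw [hα0]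
    simp [Finsupp.linearCombination_single]⟩
  have hβ : Function.Surjective β := fun y => ⟨Finsupp.single y 1, by
    rw [hβ0]
    simp [Finsupp.linearCombination_single]⟩
  let D : TriMod R S M := ⟨(P.X →₀ R), (M ⊗[R] (P.X →₀ R)) × (P.Y →₀ S),
    LinearMap.inl S (M ⊗[R] (P.X →₀ R)) (P.Y →₀ S)⟩
  let π : D ⟶ P := ⟨α, LinearMap.coprod (P.phi ∘ₗ lT α) β, by
    show LinearMap.coprod (P.phi ∘ₗ lT α) β ∘ₗ LinearMap.inl S _ _ = P.phi ∘ₗ lT α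
    ext t
    simp⟩
  haveI : Epi π := by
    constructor
    intro T v w hvw
    have h1 : v.f ∘ₗ α = w.f ∘ₗ α := congrArg TriModHom.f hvw
    have h2 : v.g ∘ₗ LinearMap.coprod (P.phi ∘ₗ lT α) β =
        w.g ∘ₗ LinearMap.coprod (P.phi ∘ₗ lT α) β := congrArg TriModHom.g hvw
    apply TriModHom.ext
    · apply LinearMap.ext
      intro x
      obtain ⟨x', rfl⟩ := hα x
      exact LinearMap.congr_fun h1 x'
    · apply LinearMap.ext
      intro y
      obtain ⟨u, hu⟩ := hβ y
      have h3 := LinearMap.congr_fun h2 (0, u)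
      simpa only [LinearMap.coe_comp, Function.comp_apply, LinearMap.coprod_apply,
        map_zero, zero_add, hu] using h3
  obtain ⟨s, hs⟩ := hP.factors (𝟙 P) π
  exact ⟨s.g, π.g, congrArg TriModHom.g hs⟩

end Retracts

section Statement
open CategoryTheory Limits
variable {R S M : Type} [CommRing R] [CommRing S]
  [AddCommGroup M] [Module R M] [Module S M] [SMulCommClass R S M]

/-- If `Add(M) ⊆ GProj(S)ᗮ`, then a complex `E'` of projective `S`-modules is totally
acyclic iff `e²_λ(E')` is a totally acyclic complex of projective Γ-modules. -/
theorem totallyAcyclic_iff_e2c (h2 : Cond2 S M) (E' : ChainComplex (ModuleCat S) ℤ)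
    (hproj : ∀ i, Module.Projective S (E'.X i)) :
    IsTotallyAcyclic E' ↔ IsTotallyAcyclic (e2c R S M E') := by
  constructor
  · intro hE
    refine ⟨fun i => projective_e2obj (hproj i),
      fun i => (e2c_exactAt_iff R M E' i).2 (hE.2.1 i), ?_⟩
    intro PΓ hPΓ i gΓ hgΓ
    obtain ⟨ιY, ρY, hretr⟩ := proj_Y_retract PΓ hPΓ
    have hl1 : Lifts S E' (M ⊗[R] (PΓ.X →₀ R)) :=
      lifts_retract (t2f (R := R) (S := S) (M := M) PΓ.X)
        (f2t (R := R) (S := S) (M := M) PΓ.X) (f2t_comp_t2f PΓ.X)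
        (lifts_finsuppM hE h2 PΓ.X)
    have hl2 : Lifts S E' (PΓ.Y →₀ S) :=
      lifts_of_projective hE (PΓ.Y →₀ S) inferInstance
    have hlifts : Lifts S E' PΓ.Y :=
      lifts_retract ιY ρY hretr (lifts_prod hl1 hl2)
    have hg0 : gΓ.g ∘ₗ (E'.d (i+1) i).hom = 0 :=
      congrArg TriModHom.g hgΓ
    obtain ⟨h, hh⟩ := hlifts i gΓ.g hg0
    exact ⟨homFromE2 h, hom_ext_e2_src hh⟩
  · intro hΓ
    refine ⟨fun i => (IsProjective.iff_projective _).1 (hproj i),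
      fun i => (e2c_exactAt_iff R M E' i).1 (hΓ.2.1 i), ?_⟩
    intro P hP i g hg
    have hPmod : Module.Projective S ↥P := (IsProjective.iff_projective (R := S) _).2 hP
    obtain ⟨hΓlift, hhΓ⟩ := hΓ.2.2 (e2obj R S M ↥P) (projective_e2obj hPmod) i (e2hom g.hom)
      (hom_ext_e2_src (show g.hom ∘ₗ
        (E'.d (i+1) i).hom = 0 from congrArg ModuleCat.Hom.hom hg))
    exact ⟨ModuleCat.ofHom hΓlift.g, ModuleCat.hom_ext (congrArg TriModHom.g hhΓ)⟩

end Statement
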